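/- Let P be a finite set of points in the plane in convex position, and let E be a nonempty finite family of segments (diagonals) whose endpoints are distinct points of P, such that no two segments of E cross (any two distinct segments of E intersect in at most a common endpoint). Then there exists a segment d ∈ E with endpoints x, y and a closed half-plane H bounded by the line through x and y such that every segment of E other than d is contained in H (i.e., one of the two subpolygons of the convex hull of P determined by d contains no other diagonal of E). -/

import Mathlib

noncomputable section

/-- The plane ℝ². -/
abbrev Plane : Type := EuclideanSpace ℝ (Fin 2)

/-- A finite point set is in convex position if every point of it is an extreme point
(vertex) of its convex hull, i.e. no point lies in the convex hull of the others. -/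
def ConvexPos (P : Finset Plane) : Prop :=
  ∀ q ∈ P, q ∉ convexHull ℝ ((P : Set Plane) \ {q})

def perp (a b : Plane) : Plane →ₗ[ℝ] ℝ where
  toFun x := (b 1 - a 1) * x 0 - (b 0 - a 0) * x 1
  map_add' x y := by simp [PiLp.add_apply]; ring
  map_smul' c x := by simp [PiLp.smul_apply, smul_eq_mul]; ring

lemma perp_apply (a b x : Plane) : perp a b x = (b 1 - a 1) * x 0 - (b 0 - a 0) * x 1 := rfl

lemma perp_eq (a b : Plane) : perp a b a = perp a b b := by simp [perp_apply]; ring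

lemma plane_ext {a b : Plane} (h0 : a 0 = b 0) (h1 : a 1 = b 1) : a = b := by
  ext i; fin_cases i; exacts [h0, h1]

lemma perp_ne_zero {a b : Plane} (h : a ≠ b) : perp a b ≠ 0 := by
  intro h0
  have h1 := congrFun (congrArg (fun u : Plane →ₗ[ℝ] ℝ => (u : Plane → ℝ)) h0)
    (show Plane from WithLp.toLp 2 ![b 1 - a 1, a 0 - b 0])
  simp [perp_apply, Matrix.cons_val_zero, Matrix.cons_val_one] at h1
  have : (b 1 - a 1) = 0 ∧ (b 0 - a 0) = 0 := by constructor <;> nlinarith [sq_nonneg (b 0 - a 0), sq_nonneg (b 1 - a 1)]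
  exact h (plane_ext (by linarith [this.2]) (by linarith [this.1]))

lemma perp_swap (a b : Plane) : perp b a = - perp a b := by
  ext x; simp [perp_apply]; ring

def E0 : Plane := WithLp.toLp 2 ![1,0]
def E1 : Plane := WithLp.toLp 2 ![0,1]

lemma basis_decomp (x : Plane) : x = x 0 • E0 + x 1 • E1 := by
  apply plane_ext <;>
    simp [E0, E1, PiLp.add_apply, PiLp.smul_apply, Matrix.cons_val_zero, Matrix.cons_val_one]

lemma u_apply_coords (u : Plane →ₗ[ℝ] ℝ) (x : Plane) :
    u x = u E0 * x 0 + u E1 * x 1 := by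
  conv_lhs => rw [basis_decomp x]
  simp [map_add, map_smul, smul_eq_mul]
  ring

lemma scalar_span {c0 c1 v0 v1 w0 w1 : ℝ} (hc : c0 ≠ 0 ∨ c1 ≠ 0)
    (hv : c0 * v0 + c1 * v1 = 0) (hw : c0 * w0 + c1 * w1 = 0)
    (hvne : v0 ≠ 0 ∨ v1 ≠ 0) : ∃ t : ℝ, w0 = t * v0 ∧ w1 = t * v1 := by
  have hD : v0 * w1 - v1 * w0 = 0 := by
    rcases hc with h | h
    · have hk : c0 * (v0 * w1 - v1 * w0) = 0 := by linear_combination w1 * hv - v1 * hw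
      exact (mul_eq_zero.1 hk).resolve_left h
    · have hk : c1 * (v0 * w1 - v1 * w0) = 0 := by linear_combination v0 * hw - w0 * hv
      exact (mul_eq_zero.1 hk).resolve_left h
  by_cases hv0 : v0 = 0
  · have hv1 : v1 ≠ 0 := hvne.resolve_left (not_not_intro hv0)
    subst hv0
    have hw0 : w0 = 0 := by
      have : v1 * w0 = 0 := by linarith
      rcases mul_eq_zero.1 this with h' | h'
      · exact absurd h' hv1
      · exact h'
    exact ⟨w1 / v1, by simp [hw0], by field_simp⟩
  · refine ⟨w0 / v0, by field_simp, by field_simp; nlinarith [hD]⟩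

lemma ker_span {u : Plane →ₗ[ℝ] ℝ} (hu : u ≠ 0) {v w : Plane}
    (hv : u v = 0) (hw : u w = 0) (hvne : v ≠ 0) : ∃ t : ℝ, w = t • v := by
  have hc : u E0 ≠ 0 ∨ u E1 ≠ 0 := by
    by_contra hcon
    push_neg at hcon
    apply hu
    ext x
    rw [u_apply_coords u x, hcon.1, hcon.2]
    simp
  have hvc : u E0 * v 0 + u E1 * v 1 = 0 := by
    have h := u_apply_coords u v; rw [hv] at h; linarith
  have hwc : u E0 * w 0 + u E1 * w 1 = 0 := by
    have h := u_apply_coords u w; rw [hw] at h; linarith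
  have hvne' : v 0 ≠ 0 ∨ v 1 ≠ 0 := by
    by_contra hcon
    push_neg at hcon
    exact hvne (plane_ext (by simp [hcon.1]) (by simp [hcon.2]))
  obtain ⟨t, h0, h1⟩ := scalar_span hc hvc hwc hvne'
  exact ⟨t, plane_ext (by simpa [PiLp.smul_apply, mul_comm] using h0)
    (by simpa [PiLp.smul_apply, mul_comm] using h1)⟩

lemma extreme_of_pos {P : Finset Plane} (hP : ConvexPos P) {p y z : Plane} (hp : p ∈ P)
    (hy : y ∈ convexHull ℝ (P : Set Plane)) (hz : z ∈ convexHull ℝ (P : Set Plane))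
    (hseg : p ∈ openSegment ℝ y z) : y = p ∧ z = p := by
  by_cases hPp : ((P : Set Plane) \ {p}).Nonempty
  · have hins : insert p ((P : Set Plane) \ {p}) = (P : Set Plane) := by
      rw [Set.insert_diff_singleton, Set.insert_eq_self.2 (by exact_mod_cast hp)]
    have hhull : convexHull ℝ (P : Set Plane)
        = convexJoin ℝ {p} (convexHull ℝ ((P : Set Plane) \ {p})) := by
      conv_lhs => rw [← hins]
      rw [convexHull_insert hPp]
    rw [hhull, mem_convexJoin] at hy hz
    obtain ⟨p₁, hp₁, y', hy', hyseg⟩ := hy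
    obtain ⟨p₂, hp₂, z', hz', hzseg⟩ := hz
    rw [Set.mem_singleton_iff] at hp₁ hp₂
    rw [hp₁] at hyseg
    rw [hp₂] at hzseg
    obtain ⟨s₁, s₂, hs₁, hs₂, hs, rfl⟩ := hyseg
    obtain ⟨t₁, t₂, ht₁, ht₂, ht, rfl⟩ := hzseg
    obtain ⟨α, β, hα, hβ, hαβ, hcomb⟩ := hseg
    set μ := α * s₂ + β * t₂ with hμ
    have key : μ • p = (α * s₂) • y' + (β * t₂) • z' := by
      have h1 : α * s₁ + β * t₁ = 1 - μ := by nlinarith [hs, ht, hαβ]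
      linear_combination (norm := module) (-1 : ℝ) • hcomb + h1 • p
    have hμ0 : 0 ≤ μ := by positivity
    rcases eq_or_lt_of_le hμ0 with hμe | hμpos
    · have hs₂0 : s₂ = 0 := by nlinarith
      have ht₂0 : t₂ = 0 := by nlinarith
      have hs₁1 : s₁ = 1 := by linarith
      have ht₁1 : t₁ = 1 := by linarith
      constructor <;> simp [hs₂0, ht₂0, hs₁1, ht₁1]
    · exfalso
      apply hP p hp
      have hmem : (μ⁻¹ * (α * s₂)) • y' + (μ⁻¹ * (β * t₂)) • z'
          ∈ convexHull ℝ ((P : Set Plane) \ {p}) := by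
        refine (convex_convexHull ℝ _) hy' hz' (by positivity) (by positivity) ?_
        field_simp
        linarith
      have hpe : p = (μ⁻¹ * (α * s₂)) • y' + (μ⁻¹ * (β * t₂)) • z' := by
        have := congrArg (fun v => μ⁻¹ • v) key
        simpa [smul_smul, ne_of_gt hμpos, inv_mul_cancel₀ (ne_of_gt hμpos), smul_add] using this
      have h2 := hmem
      rw [← hpe] at h2
      exact h2
  · rw [Set.not_nonempty_iff_eq_empty, Set.diff_eq_empty] at hPp
    have : convexHull ℝ (P : Set Plane) ⊆ {p} := by
      have := convexHull_mono hPp (𝕜 := ℝ)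
      rwa [convexHull_singleton] at this
    constructor
    · exact this hy
    · exact this hz

/-- Points of the hull on the line through two vertices lie on the chord. -/
lemma hull_line_subset_segment {P : Finset Plane} (hP : ConvexPos P) {a b : Plane}
    (ha : a ∈ P) (hb : b ∈ P) (hab : a ≠ b) {u : Plane →ₗ[ℝ] ℝ} (hu : u ≠ 0)
    (huab : u a = u b) {x : Plane} (hx : x ∈ convexHull ℝ (P : Set Plane))
    (hxl : u x = u a) : x ∈ segment ℝ a b := by
  have hva : u (b - a) = 0 := by rw [map_sub]; rw [huab]; ring
  have hwa : u (x - a) = 0 := by rw [map_sub, hxl]; ring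
  obtain ⟨t, hxt⟩ := ker_span hu hva hwa (sub_ne_zero.2 (Ne.symm hab))
  have hx' : x = a + t • (b - a) := by
    have : x - a = t • (b - a) := hxt
    linear_combination (norm := module) this
  have haP : a ∈ convexHull ℝ (P : Set Plane) := subset_convexHull ℝ _ (by exact_mod_cast ha)
  have hbP : b ∈ convexHull ℝ (P : Set Plane) := subset_convexHull ℝ _ (by exact_mod_cast hb)
  rcases le_or_gt t 0 with ht0 | ht0
  · rcases eq_or_lt_of_le ht0 with rfl | htneg
    · rw [hx']; simpa using left_mem_segment ℝ a b
    · exfalso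
      -- a is strictly between x and b
      have h1t : (0:ℝ) < 1 - t := by linarith
      have hmem : a ∈ openSegment ℝ x b := by
        refine ⟨(1 - t)⁻¹, (1 - t)⁻¹ * (-t), inv_pos.2 h1t,
          mul_pos (inv_pos.2 h1t) (by linarith), ?_, ?_⟩
        · field_simp
          ring
        · rw [hx']
          match_scalars <;> field_simp <;> ring
      have := extreme_of_pos hP ha hx hbP hmem
      exact hab this.2.symm
  · rcases le_or_gt t 1 with ht1 | ht1
    · rw [hx', segment_eq_image']
      exact ⟨t, ⟨le_of_lt ht0, ht1⟩, rfl⟩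
    · exfalso
      -- b is strictly between a and x
      have hmem : b ∈ openSegment ℝ a x := by
        refine ⟨1 - t⁻¹, t⁻¹, ?_, by positivity, by ring, ?_⟩
        · have : t⁻¹ < 1 := by
            rw [inv_lt_one_iff₀]; right; exact ht1
          linarith
        · rw [hx']
          have ht0' : t ≠ 0 := by positivity
          match_scalars <;> field_simp <;> ring
      have := extreme_of_pos hP hb haP hx hmem
      exact hab this.1

/-- A point of `P` on the line through two other vertices must be one of them. -/
lemma point_on_line {P : Finset Plane} (hP : ConvexPos P) {a b : Plane}
    (ha : a ∈ P) (hb : b ∈ P) (hab : a ≠ b) {u : Plane →ₗ[ℝ] ℝ} (hu : u ≠ 0)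
    (huab : u a = u b) {z : Plane} (hz : z ∈ P) (hzl : u z = u a) : z = a ∨ z = b := by
  by_contra hcon
  push_neg at hcon
  have hseg : z ∈ segment ℝ a b :=
    hull_line_subset_segment hP ha hb hab hu huab
      (subset_convexHull ℝ _ (by exact_mod_cast hz)) hzl
  have hopen : z ∈ openSegment ℝ a b := by
    rw [← insert_endpoints_openSegment] at hseg
    rcases hseg with h | h
    · exact absurd h hcon.1
    · rcases h with h | h
      · exact absurd h hcon.2
      · exact h
  have := extreme_of_pos hP hz (subset_convexHull ℝ _ (by exact_mod_cast ha))
    (subset_convexHull ℝ _ (by exact_mod_cast hb)) hopen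
  exact hcon.1 this.1.symm

lemma seg_le {u : Plane →ₗ[ℝ] ℝ} {a b : Plane} {c : ℝ} (ha : u a ≤ c) (hb : u b ≤ c)
    {x : Plane} (hx : x ∈ segment ℝ a b) : u x ≤ c := by
  obtain ⟨s, t, hs, ht, hst, rfl⟩ := hx
  have : u (s • a + t • b) = s * u a + t * u b := by
    simp [map_add, map_smul, smul_eq_mul]
  rw [this]
  have hc : s * c + t * c = c := by rw [← add_mul, hst, one_mul]
  nlinarith [mul_le_mul_of_nonneg_left ha hs, mul_le_mul_of_nonneg_left hb ht]

lemma seg_ge {u : Plane →ₗ[ℝ] ℝ} {a b : Plane} {c : ℝ} (ha : c ≤ u a) (hb : c ≤ u b)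
    {x : Plane} (hx : x ∈ segment ℝ a b) : c ≤ u x := by
  obtain ⟨s, t, hs, ht, hst, rfl⟩ := hx
  have : u (s • a + t • b) = s * u a + t * u b := by
    simp [map_add, map_smul, smul_eq_mul]
  rw [this]
  have hc : s * c + t * c = c := by rw [← add_mul, hst, one_mul]
  nlinarith [mul_le_mul_of_nonneg_left ha hs, mul_le_mul_of_nonneg_left hb ht]

lemma combo_mem_segment {a b : Plane} {t : ℝ} (h0 : 0 ≤ t) (h1 : t ≤ 1) :
    (1 - t) • a + t • b ∈ segment ℝ a b := by
  rw [segment_eq_image]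
  exact ⟨t, ⟨h0, h1⟩, rfl⟩

lemma combo_apply (u : Plane →ₗ[ℝ] ℝ) (a b : Plane) (t : ℝ) :
    u ((1 - t) • a + t • b) = (1 - t) * u a + t * u b := by
  simp [map_add, map_smul, smul_eq_mul]

/-- Crossing the line: parameter where `u` reaches `c` on the way from `p` to `r`. -/
lemma exists_cross {u : Plane →ₗ[ℝ] ℝ} {p r : Plane} {c : ℝ} (hp : c < u p) (hr : u r < c) :
    ∃ t : ℝ, 0 < t ∧ t < 1 ∧ u ((1 - t) • p + t • r) = c := by
  refine ⟨(u p - c) / (u p - u r), div_pos (by linarith) (by linarith), ?_, ?_⟩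
  · rw [div_lt_one (by linarith)]
    linarith
  · rw [combo_apply]
    have hD : u p - u r ≠ 0 := by linarith
    field_simp
    ring

/-- Core argument: if some endpoint `p` of another noncrossing diagonal with endpoints
`p, q` lies strictly above the line of `d`, we contradict minimality of the side count. -/
lemma ear_core {P : Finset Plane} (hP : ConvexPos P) {d : Plane × Plane}
    (hd1P : d.1 ∈ P) (hd2P : d.2 ∈ P) (hd12 : d.1 ≠ d.2)
    {u : Plane →ₗ[ℝ] ℝ} (hu0 : u ≠ 0) (hu12 : u d.1 = u d.2)
    {p q : Plane} (hpP : p ∈ P) (hqP : q ∈ P) (hpq : p ≠ q)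
    (hcross' : ∀ x ∈ segment ℝ p q ∩ segment ℝ d.1 d.2,
      (x = p ∨ x = q) ∧ (x = d.1 ∨ x = d.2))
    (hmin : ∀ u' : Plane →ₗ[ℝ] ℝ, u' = perp p q ∨ u' = -perp p q →
      (P.filter fun z => u d.1 < u z).card ≤ (P.filter fun z => u' p < u' z).card)
    (hp : u d.1 < u p) : False := by
  classical
  set c := u d.1 with hc
  have hpP' : p ∈ (P : Set Plane) := by exact_mod_cast hpP
  have hqP' : q ∈ (P : Set Plane) := by exact_mod_cast hqP
  rcases lt_or_ge (u q) c with hq | hq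
  · -- Case A : the segment p q crosses the line of d
    obtain ⟨t, ht0, ht1, hxc⟩ := exists_cross hp hq
    have hxseg : (1 - t) • p + t • q ∈ segment ℝ p q :=
      combo_mem_segment (le_of_lt ht0) (le_of_lt ht1)
    have hxhull : (1 - t) • p + t • q ∈ convexHull ℝ (P : Set Plane) :=
      (convex_convexHull ℝ _).segment_subset (subset_convexHull ℝ _ hpP')
        (subset_convexHull ℝ _ hqP') hxseg
    have hxd : (1 - t) • p + t • q ∈ segment ℝ d.1 d.2 :=
      hull_line_subset_segment hP hd1P hd2P hd12 hu0 hu12 hxhull hxc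
    rcases (hcross' _ ⟨hxseg, hxd⟩).1 with h | h
    · rw [h] at hxc; linarith
    · rw [h] at hxc; linarith
  · -- Case B : both endpoints weakly above the line of d
    -- find an endpoint r of d which is not p nor q
    have hrex : ∃ r, (r = d.1 ∨ r = d.2) ∧ r ≠ p ∧ r ≠ q := by
      have hmid : ∀ (_ : segment ℝ p q = segment ℝ d.1 d.2), False := by
        intro hseq
        set m := (1/2 : ℝ) • d.1 + (1/2 : ℝ) • d.2 with hm
        have hmd : m ∈ segment ℝ d.1 d.2 :=
          ⟨1/2, 1/2, by norm_num, by norm_num, by norm_num, rfl⟩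
        have hmp : m ∈ segment ℝ p q := hseq ▸ hmd
        rcases (hcross' m ⟨hmp, hmd⟩).2 with h | h
        · apply hd12
          have h2 : (1/2 : ℝ) • (d.2 - d.1) = 0 := by
            linear_combination (norm := module) h
          have h3 := (smul_eq_zero.1 h2).resolve_left (by norm_num)
          have : d.2 = d.1 := by linear_combination (norm := module) h3
          exact this.symm
        · apply hd12
          have h2 : (1/2 : ℝ) • (d.1 - d.2) = 0 := by
            linear_combination (norm := module) h
          have h3 := (smul_eq_zero.1 h2).resolve_left (by norm_num)
          linear_combination (norm := module) h3
      by_cases h1p : d.1 = p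
      · by_cases h2q : d.2 = q
        · exact absurd (by rw [← h1p, ← h2q]) hmid
        · refine ⟨d.2, Or.inr rfl, fun h => hd12 (h1p ▸ h ▸ rfl), h2q⟩
      · by_cases h1q : d.1 = q
        · by_cases h2p : d.2 = p
          · refine absurd ?_ hmid
            rw [← h1q, ← h2p, segment_symm]
          · exact ⟨d.2, Or.inr rfl, h2p, fun h => hd12 (h1q ▸ h ▸ rfl)⟩
        · exact ⟨d.1, Or.inl rfl, h1p, h1q⟩
    obtain ⟨r, hrd, hrp, hrq⟩ := hrex
    have hrP : r ∈ P := by rcases hrd with rfl | rfl; exacts [hd1P, hd2P]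
    have hrP' : r ∈ (P : Set Plane) := by exact_mod_cast hrP
    have hur : u r = c := by rcases hrd with rfl | rfl; exacts [rfl, hu12.symm]
    set w := perp p q with hw
    have hw0 : w ≠ 0 := perp_ne_zero hpq
    have hw12 : w p = w q := perp_eq _ _
    have hwr : w r ≠ w p := by
      intro hcontra
      have hrseg : r ∈ segment ℝ p q :=
        hull_line_subset_segment hP hpP hqP hpq hw0 hw12
          (subset_convexHull ℝ _ hrP') hcontra
      have hopen : r ∈ openSegment ℝ p q :=
        mem_openSegment_of_ne_left_right (Ne.symm hrp) (Ne.symm hrq) hrseg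
      have := extreme_of_pos hP hrP (subset_convexHull ℝ _ hpP')
        (subset_convexHull ℝ _ hqP') hopen
      exact hrp this.1.symm
    obtain ⟨u', hu'or, hu'r⟩ :
        ∃ u' : Plane →ₗ[ℝ] ℝ, (u' = w ∨ u' = -w) ∧ u' r < u' p := by
      rcases lt_or_gt_of_ne hwr with h | h
      · exact ⟨w, Or.inl rfl, h⟩
      · exact ⟨-w, Or.inr rfl, by simpa using h⟩
    have hu'0 : u' ≠ 0 := by
      rcases hu'or with rfl | rfl
      · exact hw0
      · simpa using hw0
    have hu'pq : u' p = u' q := by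
      rcases hu'or with rfl | rfl
      · exact hw12
      · simpa using hw12
    -- every point strictly on the far side of the line p-q is strictly above the line of d
    have hsub : (P.filter fun z => u' p < u' z) ⊆ (P.filter fun z => c < u z).erase p := by
      intro z hz
      rw [Finset.mem_filter] at hz
      obtain ⟨hzP, hzgt⟩ := hz
      rw [Finset.mem_erase, Finset.mem_filter]
      have hzp : z ≠ p := fun h => absurd hzgt (by rw [h]; exact lt_irrefl _)
      refine ⟨hzp, hzP, ?_⟩
      by_contra hzc
      push_neg at hzc
      obtain ⟨t, ht0, ht1, hxc'⟩ := exists_cross hzgt hu'r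
      set x := (1 - t) • z + t • r with hx
      have hzP' : z ∈ (P : Set Plane) := by exact_mod_cast hzP
      have hxseg : x ∈ segment ℝ z r :=
        combo_mem_segment (le_of_lt ht0) (le_of_lt ht1)
      have hxhull : x ∈ convexHull ℝ (P : Set Plane) :=
        (convex_convexHull ℝ _).segment_subset (subset_convexHull ℝ _ hzP')
          (subset_convexHull ℝ _ hrP') hxseg
      have hxe : x ∈ segment ℝ p q :=
        hull_line_subset_segment hP hpP hqP hpq hu'0 hu'pq hxhull hxc'
      have hxge : c ≤ u x := seg_ge (le_of_lt hp) hq hxe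
      have hux : u x = (1 - t) * u z + t * u r := combo_apply u z r t
      have huzc : u z = c := by
        have hprod : (1 - t) * (c - u z) ≤ 0 := by nlinarith [hxge, hux, hur]
        have : c ≤ u z := by
          by_contra hlt
          push_neg at hlt
          nlinarith [hprod]
        linarith
      have hzd := point_on_line hP hd1P hd2P hd12 hu0 hu12 hzP (by rw [huzc])
      have hzrne : z ≠ r := by
        intro h
        rw [h] at hzgt
        exact absurd hzgt (not_lt.2 (le_of_lt hu'r))
      have hseg_zr : segment ℝ z r = segment ℝ d.1 d.2 := by
        rcases hzd with h1 | h1 <;> rcases hrd with h2 | h2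
        · exact absurd (h1.trans h2.symm) hzrne
        · rw [h1, h2]
        · rw [h1, h2, segment_symm]
        · exact absurd (h1.trans h2.symm) hzrne
      have hxd : x ∈ segment ℝ d.1 d.2 := hseg_zr ▸ hxseg
      have hcr := (hcross' x ⟨hxe, hxd⟩).2
      have hxzr : x = z ∨ x = r := by
        rcases hzd with h1 | h1 <;> rcases hrd with h2 | h2 <;> rcases hcr with h3 | h3 <;>
          first
            | (left; rw [h1]; exact h3)
            | (right; rw [h2]; exact h3)
            | (exact absurd (h1.trans h2.symm) hzrne)
      rcases hxzr with h | h
      · rw [h] at hxc'; exact absurd hxc' (ne_of_gt hzgt)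
      · rw [h] at hxc'; exact absurd hxc' (ne_of_lt hu'r)
    -- cardinality contradiction
    have hple : p ∈ P.filter fun z => c < u z := Finset.mem_filter.2 ⟨hpP, hp⟩
    have hcard1 : (P.filter fun z => u' p < u' z).card
        ≤ (P.filter fun z => c < u z).card - 1 := by
      calc (P.filter fun z => u' p < u' z).card
          ≤ ((P.filter fun z => c < u z).erase p).card := Finset.card_le_card hsub
        _ = (P.filter fun z => c < u z).card - 1 := Finset.card_erase_of_mem hple
    have hmin2 : (P.filter fun z => c < u z).card
        ≤ (P.filter fun z => u' p < u' z).card := by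
      apply hmin
      rcases hu'or with rfl | rfl
      · exact Or.inl rfl
      · exact Or.inr rfl
    have hpos : 0 < (P.filter fun z => c < u z).card := Finset.card_pos.2 ⟨p, hple⟩
    omega

abbrev sgn (e : Plane × Plane) (s : Bool) : Plane →ₗ[ℝ] ℝ :=
  if s then perp e.1 e.2 else -perp e.1 e.2

lemma sgn_ne_zero {e : Plane × Plane} (h : e.1 ≠ e.2) (s : Bool) : sgn e s ≠ 0 := by
  cases s
  · simpa [sgn] using perp_ne_zero h
  · simpa [sgn] using perp_ne_zero h

lemma sgn_eq (e : Plane × Plane) (s : Bool) : sgn e s e.1 = sgn e s e.2 := by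
  cases s <;> simp [sgn, perp_eq e.1 e.2]

abbrev cnt (P : Finset Plane) (e : Plane × Plane) (s : Bool) : ℕ :=
  (P.filter fun z => sgn e s e.1 < sgn e s z).card

abbrev mincnt (P : Finset Plane) (e : Plane × Plane) : ℕ := min (cnt P e true) (cnt P e false)

/-- Ear lemma for noncrossing diagonals: if `E` is a nonempty finite family of segments
(given by ordered pairs of distinct endpoints in a convex-position set `P`) such that any
two distinct members of `E` intersect in at most a common endpoint, then some `d ∈ E`
has a closed half-plane `H = {x | u x ≤ u d.1}` bounded by the line through its endpoints
(`u` a nonzero linear functional with `u d.1 = u d.2`) containing every other segment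
of `E`. -/
theorem exists_ear_diagonal
    (P : Finset Plane) (hP : ConvexPos P)
    (E : Finset (Plane × Plane)) (hE : E.Nonempty)
    (hend : ∀ e ∈ E, e.1 ∈ P ∧ e.2 ∈ P ∧ e.1 ≠ e.2)
    (hcross : ∀ e ∈ E, ∀ e' ∈ E, e ≠ e' →
      ∀ x ∈ segment ℝ e.1 e.2 ∩ segment ℝ e'.1 e'.2,
        (x = e.1 ∨ x = e.2) ∧ (x = e'.1 ∨ x = e'.2)) :
    ∃ d ∈ E, ∃ u : Plane →ₗ[ℝ] ℝ, u ≠ 0 ∧ u d.1 = u d.2 ∧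
      ∀ e ∈ E, e ≠ d → ∀ x ∈ segment ℝ e.1 e.2, u x ≤ u d.1 := by
  obtain ⟨d, hdE, hdmin⟩ := E.exists_min_image (mincnt P) hE
  obtain ⟨hd1P, hd2P, hd12⟩ := hend d hdE
  obtain ⟨s₀, hs₀⟩ : ∃ s, cnt P d s = mincnt P d := by
    rcases min_cases (cnt P d true) (cnt P d false) with ⟨h, _⟩ | ⟨h, _⟩
    · exact ⟨true, h.symm⟩
    · exact ⟨false, h.symm⟩
  set u := sgn d s₀ with hu_def
  have hu0 : u ≠ 0 := sgn_ne_zero hd12 s₀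
  have hu12 : u d.1 = u d.2 := sgn_eq d s₀
  refine ⟨d, hdE, u, hu0, hu12, ?_⟩
  have key : ∀ e ∈ E, e ≠ d → u e.1 ≤ u d.1 ∧ u e.2 ≤ u d.1 := by
    intro e he hne
    obtain ⟨he1P, he2P, he12⟩ := hend e he
    by_contra hcon
    rw [not_and_or] at hcon
    push_neg at hcon
    have hcross'' : ∀ x ∈ segment ℝ e.1 e.2 ∩ segment ℝ d.1 d.2,
        (x = e.1 ∨ x = e.2) ∧ (x = d.1 ∨ x = d.2) :=
      fun x hx => hcross e he d hdE hne x hx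
    have hminE : ∀ u' : Plane →ₗ[ℝ] ℝ, u' = perp e.1 e.2 ∨ u' = -perp e.1 e.2 →
        (P.filter fun z => u d.1 < u z).card ≤ (P.filter fun z => u' e.1 < u' z).card := by
      have base : ∀ s : Bool, (P.filter fun z => u d.1 < u z).card ≤ cnt P e s := by
        intro s
        have h1 : (P.filter fun z => u d.1 < u z).card = cnt P d s₀ := rfl
        rw [h1, hs₀]
        refine le_trans (hdmin e he) ?_
        cases s
        · exact min_le_right _ _
        · exact min_le_left _ _
      intro u' hu'
      rcases hu' with rfl | rfl
      · exact base true
      · exact base false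
    rcases hcon with hgt | hgt
    · exact (ear_core hP hd1P hd2P hd12 hu0 hu12 he1P he2P he12 hcross'' hminE hgt).elim
    · refine (ear_core hP hd1P hd2P hd12 hu0 hu12 he2P he1P he12.symm ?_ ?_ hgt).elim
      · intro x hx
        have := hcross'' x ⟨(segment_symm ℝ e.2 e.1) ▸ hx.1, hx.2⟩
        exact ⟨this.1.symm, this.2⟩
      · intro u' hu'
        have horient : u' = perp e.1 e.2 ∨ u' = -perp e.1 e.2 := by
          rcases hu' with rfl | rfl
          · right; rw [perp_swap e.1 e.2]
          · left; rw [perp_swap e.1 e.2]; simp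
        have hfix : u' e.2 = u' e.1 := by
          rcases horient with rfl | rfl
          · exact (perp_eq e.1 e.2).symm
          · simpa using (perp_eq e.1 e.2).symm
        rw [hfix]
        exact hminE u' horient
  intro e he hne x hx
  exact seg_le (key e he hne).1 (key e he hne).2 hx
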